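/- Let μ be a finite Borel measure on ℝ² such that μ(B(x,r)) ≤ C₀ r for every ball. Then for every ball B with μ(B) ≥ δ·r(B) there exist constants C₁, C₁′ ≥ 1 depending only on C₀ and δ and three balls B₁, B₂, B₃ of radius r(B)/C₁ with centers in B whose centers are pairwise at distance at least 12 r(B)/C₁, and satisfying μ(B_i) ≥ r(B_i)/C₁′ for i = 1,2,3. -/

import Mathlib

open MeasureTheory Metric ENNReal

private lemma cover_key (C₁ : ℝ) (hC₁ : 1 ≤ C₁) :
    ∃ N : ℕ, 0 < N ∧ ∀ (μ : Measure (EuclideanSpace ℝ (Fin 2)))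
      (x : EuclideanSpace ℝ (Fin 2)) (r : ℝ), 0 < r →
      ∀ S : Set (EuclideanSpace ℝ (Fin 2)), S ⊆ closedBall x r →
      ∀ a : ℝ≥0∞, a ≠ 0 → a ≤ μ S →
      ∃ y ∈ S, a / N ≤ μ (closedBall y (r / C₁)) := by
  have hC₁0 : (0:ℝ) < C₁ := lt_of_lt_of_le one_pos hC₁
  have he : (0:ℝ) < 1 / (2 * C₁) := by positivity
  obtain ⟨t, hts, htf, hcov⟩ :=
    (isCompact_closedBall (0 : EuclideanSpace ℝ (Fin 2)) 1).finite_cover_balls he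
  have h1 : (0 : EuclideanSpace ℝ (Fin 2)) ∈ closedBall (0:EuclideanSpace ℝ (Fin 2)) 1 := by
    simp
  classical
  set T := htf.toFinset with hT
  have hTne : T.Nonempty := by
    obtain ⟨z, hz⟩ := Set.mem_iUnion₂.1 (hcov h1)
    exact ⟨z, htf.mem_toFinset.2 hz.1⟩
  refine ⟨T.card, Finset.card_pos.2 hTne, ?_⟩
  intro μ x r hr S hS a ha haμ
  set e := r * (1 / (2 * C₁)) with hedef
  have hepos : 0 < e := by positivity
  -- the rescaled cover
  have hScov : S ⊆ ⋃ z ∈ T, (S ∩ closedBall (x + r • z) e) := by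
    intro y hy
    have hyx : y ∈ closedBall x r := hS hy
    have hw : r⁻¹ • (y - x) ∈ closedBall (0 : EuclideanSpace ℝ (Fin 2)) 1 := by
      rw [mem_closedBall, dist_zero_right, norm_smul, norm_inv, Real.norm_eq_abs,
        abs_of_pos hr]
      rw [mem_closedBall, dist_eq_norm] at hyx
      rw [inv_mul_le_iff₀ hr, mul_one]
      exact hyx
    obtain ⟨z, hzt, hz⟩ := Set.mem_iUnion₂.1 (hcov hw)
    refine Set.mem_iUnion₂.2 ⟨z, htf.mem_toFinset.2 hzt, hy, ?_⟩
    rw [mem_closedBall, dist_eq_norm]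
    have : y - (x + r • z) = r • (r⁻¹ • (y - x) - z) := by
      rw [smul_sub, smul_inv_smul₀ (ne_of_gt hr)]
      abel
    rw [this, norm_smul, Real.norm_eq_abs, abs_of_pos hr, hedef]
    have hz' : ‖r⁻¹ • (y - x) - z‖ < 1 / (2 * C₁) := by
      rw [mem_ball, dist_eq_norm] at hz; exact hz
    exact mul_le_mul_of_nonneg_left hz'.le hr.le
  have hsum : a ≤ ∑ z ∈ T, μ (S ∩ closedBall (x + r • z) e) :=
    le_trans haμ <| le_trans (measure_mono hScov) (measure_biUnion_finset_le T _)
  obtain ⟨z, hzT, hzmax⟩ := T.exists_max_image (fun z => μ (S ∩ closedBall (x + r • z) e)) hTne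
  have hcard : a ≤ T.card * μ (S ∩ closedBall (x + r • z) e) := by
    calc a ≤ ∑ w ∈ T, μ (S ∩ closedBall (x + r • w) e) := hsum
    _ ≤ T.card • μ (S ∩ closedBall (x + r • z) e) :=
        Finset.sum_le_card_nsmul T _ _ (fun w hw => hzmax w hw)
    _ = T.card * μ (S ∩ closedBall (x + r • z) e) := by rw [nsmul_eq_mul]
  have hdiv : a / T.card ≤ μ (S ∩ closedBall (x + r • z) e) :=
    ENNReal.div_le_of_le_mul' hcard
  have hne : (S ∩ closedBall (x + r • z) e).Nonempty := by
    apply nonempty_of_measure_ne_zero (μ := μ)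
    intro h0
    rw [h0] at hdiv
    have : a / (T.card : ℝ≥0∞) ≠ 0 := by
      simp [ENNReal.div_eq_zero_iff, ha]
    exact this (le_antisymm hdiv zero_le)
  obtain ⟨y, hyS, hyB⟩ := hne
  refine ⟨y, hyS, le_trans hdiv ?_⟩
  refine le_trans (measure_mono (Set.inter_subset_right)) (measure_mono ?_)
  intro w hw
  rw [mem_closedBall] at hw hyB ⊢
  calc dist w y ≤ dist w (x + r • z) + dist (x + r • z) y := dist_triangle _ _ _
  _ ≤ e + e := add_le_add hw (by rwa [dist_comm])
  _ = r / C₁ := by rw [hedef]; field_simp; ring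

theorem stmt_13 (C₀ δ : ℝ) (hC₀ : 0 < C₀) (hδ : 0 < δ) :
    ∃ C₁ C₁' : ℝ, 1 ≤ C₁ ∧ 1 ≤ C₁' ∧
      ∀ (μ : Measure (EuclideanSpace ℝ (Fin 2))), IsFiniteMeasure μ →
        (∀ x : EuclideanSpace ℝ (Fin 2), ∀ r : ℝ, 0 < r →
          μ (closedBall x r) ≤ ENNReal.ofReal (C₀ * r)) →
        ∀ x : EuclideanSpace ℝ (Fin 2), ∀ r : ℝ, 0 < r →
          ENNReal.ofReal (δ * r) ≤ μ (closedBall x r) →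
          ∃ y₁ y₂ y₃ : EuclideanSpace ℝ (Fin 2),
            y₁ ∈ closedBall x r ∧ y₂ ∈ closedBall x r ∧ y₃ ∈ closedBall x r ∧
            12 * r / C₁ ≤ dist y₁ y₂ ∧ 12 * r / C₁ ≤ dist y₁ y₃ ∧
            12 * r / C₁ ≤ dist y₂ y₃ ∧
            ENNReal.ofReal ((r / C₁) / C₁') ≤ μ (closedBall y₁ (r / C₁)) ∧
            ENNReal.ofReal ((r / C₁) / C₁') ≤ μ (closedBall y₂ (r / C₁)) ∧
            ENNReal.ofReal ((r / C₁) / C₁') ≤ μ (closedBall y₃ (r / C₁)) := by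
  set C₁ : ℝ := max 1 (52 * C₀ / δ) with hC₁def
  have hC₁1 : (1:ℝ) ≤ C₁ := le_max_left _ _
  have hC₁0 : (0:ℝ) < C₁ := lt_of_lt_of_le one_pos hC₁1
  have hC₁δ : 52 * C₀ / δ ≤ C₁ := le_max_right _ _
  obtain ⟨N, hN, key⟩ := cover_key C₁ hC₁1
  set C₁' : ℝ := max 1 (2 * N / (δ * C₁)) with hC₁'def
  have hC₁'1 : (1:ℝ) ≤ C₁' := le_max_left _ _
  refine ⟨C₁, C₁', hC₁1, hC₁'1, ?_⟩
  intro μ _ hgrowth x r hr hμB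
  have hrC : 0 < r / C₁ := by positivity
  -- goal bound comparison
  have hNpos : (0:ℝ) < N := Nat.cast_pos.2 hN
  have hgoal : ENNReal.ofReal ((r / C₁) / C₁') ≤ ENNReal.ofReal (δ * r / 2) / N := by
    have h1 : (r / C₁) / C₁' ≤ (δ * r / 2) / N := by
      have h2 : 2 * N / (δ * C₁) ≤ C₁' := le_max_right _ _
      rw [div_le_div_iff₀ (by positivity) hNpos]
      calc r / C₁ * N = (2 * N / (δ * C₁)) * (δ * r / 2) := by field_simp
      _ ≤ C₁' * (δ * r / 2) := by
          apply mul_le_mul_of_nonneg_right h2 (by positivity)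
      _ = δ * r / 2 * C₁' := by ring
    calc ENNReal.ofReal ((r / C₁) / C₁') ≤ ENNReal.ofReal ((δ * r / 2) / N) :=
      ENNReal.ofReal_le_ofReal h1
    _ = ENNReal.ofReal (δ * r / 2) / ENNReal.ofReal N := ENNReal.ofReal_div_of_pos hNpos
    _ = ENNReal.ofReal (δ * r / 2) / N := by rw [ENNReal.ofReal_natCast]
  -- exclusion ball measure bound
  have hexcl : ∀ y : EuclideanSpace ℝ (Fin 2),
      μ (closedBall y (13 * r / C₁)) ≤ ENNReal.ofReal (δ * r / 4) := by
    intro y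
    refine le_trans (hgrowth y _ (by positivity)) (ENNReal.ofReal_le_ofReal ?_)
    have h52 : 52 * C₀ ≤ C₁ * δ := (div_le_iff₀ hδ).1 hC₁δ
    rw [show C₀ * (13 * r / C₁) = 13 * C₀ * r / C₁ by ring,
      div_le_div_iff₀ hC₁0 (by norm_num : (0:ℝ) < 4)]
    nlinarith [mul_le_mul_of_nonneg_right h52 hr.le]
  have hδr2 : ENNReal.ofReal (δ * r / 2) ≠ 0 := by
    simp only [ne_eq, ENNReal.ofReal_eq_zero, not_le]
    positivity
  have hhalf : ENNReal.ofReal (δ * r / 2) + ENNReal.ofReal (δ * r / 2)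
      = ENNReal.ofReal (δ * r) := by
    rw [← ENNReal.ofReal_add (by positivity) (by positivity)]
    congr 1
    ring
  have hqq : ENNReal.ofReal (δ * r / 4) + ENNReal.ofReal (δ * r / 4)
      = ENNReal.ofReal (δ * r / 2) := by
    rw [← ENNReal.ofReal_add (by positivity) (by positivity)]
    congr 1
    ring
  have hq_le_h : ENNReal.ofReal (δ * r / 4) ≤ ENNReal.ofReal (δ * r / 2) :=
    ENNReal.ofReal_le_ofReal (by nlinarith)
  have hcancel : ∀ b : ℝ≥0∞, ENNReal.ofReal (δ * r) ≤ b + ENNReal.ofReal (δ * r / 2) →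
      ENNReal.ofReal (δ * r / 2) ≤ b := by
    intro b hb
    rw [← hhalf] at hb
    exact (ENNReal.add_le_add_iff_right ENNReal.ofReal_ne_top).1 hb
  -- Step 1
  obtain ⟨y₁, hy₁, hμ₁⟩ := key μ x r hr (closedBall x r) subset_rfl
    (ENNReal.ofReal (δ * r / 2)) hδr2
    (le_trans (ENNReal.ofReal_le_ofReal (by nlinarith)) hμB)
  -- Step 2
  set E₁ : Set (EuclideanSpace ℝ (Fin 2)) := closedBall y₁ (13 * r / C₁) with hE₁
  have hS₂ : ENNReal.ofReal (δ * r / 2) ≤ μ (closedBall x r \ E₁) := by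
    apply hcancel
    calc ENNReal.ofReal (δ * r) ≤ μ (closedBall x r) := hμB
    _ ≤ μ ((closedBall x r \ E₁) ∪ E₁) := measure_mono (by
        intro w hw
        by_cases h : w ∈ E₁
        · exact Or.inr h
        · exact Or.inl ⟨hw, h⟩)
    _ ≤ μ (closedBall x r \ E₁) + μ E₁ := measure_union_le _ _
    _ ≤ μ (closedBall x r \ E₁) + ENNReal.ofReal (δ * r / 2) :=
        add_le_add_right (le_trans (hexcl y₁) hq_le_h) _
  obtain ⟨y₂, hy₂, hμ₂⟩ := key μ x r hr (closedBall x r \ E₁) Set.diff_subset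
    (ENNReal.ofReal (δ * r / 2)) hδr2 hS₂
  -- Step 3
  set E₂ : Set (EuclideanSpace ℝ (Fin 2)) := closedBall y₂ (13 * r / C₁) with hE₂
  have hS₃ : ENNReal.ofReal (δ * r / 2) ≤ μ (closedBall x r \ (E₁ ∪ E₂)) := by
    apply hcancel
    calc ENNReal.ofReal (δ * r) ≤ μ (closedBall x r) := hμB
    _ ≤ μ ((closedBall x r \ (E₁ ∪ E₂)) ∪ (E₁ ∪ E₂)) := measure_mono (by
        intro w hw
        by_cases h : w ∈ E₁ ∪ E₂
        · exact Or.inr h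
        · exact Or.inl ⟨hw, h⟩)
    _ ≤ μ (closedBall x r \ (E₁ ∪ E₂)) + μ (E₁ ∪ E₂) := measure_union_le _ _
    _ ≤ μ (closedBall x r \ (E₁ ∪ E₂)) + (μ E₁ + μ E₂) :=
        add_le_add_right (measure_union_le _ _) _
    _ ≤ μ (closedBall x r \ (E₁ ∪ E₂)) + ENNReal.ofReal (δ * r / 2) := by
        apply add_le_add_right
        rw [← hqq]
        exact add_le_add (hexcl y₁) (hexcl y₂)
  obtain ⟨y₃, hy₃, hμ₃⟩ := key μ x r hr (closedBall x r \ (E₁ ∪ E₂)) Set.diff_subset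
    (ENNReal.ofReal (δ * r / 2)) hδr2 hS₃
  -- distances
  have h1213 : 12 * r / C₁ ≤ 13 * r / C₁ := by
    rw [div_le_div_iff₀ hC₁0 hC₁0]
    nlinarith
  have hd12 : 12 * r / C₁ ≤ dist y₁ y₂ := by
    have h := hy₂.2
    rw [hE₁, mem_closedBall, not_le] at h
    rw [dist_comm]
    exact le_trans h1213 h.le
  have hd13 : 12 * r / C₁ ≤ dist y₁ y₃ := by
    have h : y₃ ∉ E₁ := fun h => hy₃.2 (Or.inl h)
    rw [hE₁, mem_closedBall, not_le] at h
    rw [dist_comm]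
    exact le_trans h1213 h.le
  have hd23 : 12 * r / C₁ ≤ dist y₂ y₃ := by
    have h : y₃ ∉ E₂ := fun h => hy₃.2 (Or.inr h)
    rw [hE₂, mem_closedBall, not_le] at h
    rw [dist_comm]
    exact le_trans h1213 h.le
  exact ⟨y₁, y₂, y₃, hy₁, hy₂.1, hy₃.1, hd12, hd13, hd23,
    le_trans hgoal hμ₁, le_trans hgoal hμ₂, le_trans hgoal hμ₃⟩
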